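/- arXiv:2202.12277 — 2 statements merged into one kernel-verified Lean document; each statement's English description precedes it below -/
import Mathlib

section
/- Let X ⊆ ℝⁿ be a nonempty convex compact set with κ = max_{x∈X} ‖x‖₂ > 0 and C = cone({κ} × X) ⊆ ℝ^{n+1}. Let ω > 0, f ∈ ℝⁿ, x ∈ X, α ≥ 0 with π_C(u') = α·(κ, x) for some u' ∈ ℝ^{n+1}. Set v = (⟨f, x⟩/κ, −f) and u = u' + ω v. Assume π_C(u) ≠ 0 and let x⁺ ∈ X and β > 0 be such that π_C(u) = β·(κ, x⁺). Then ⟨f, x⁺⟩ ≤ ⟨f, x⟩ − (κ / (ω · ‖π_C(u)‖_∞)) · ‖π_C(u) − π_C(u')‖₂². In particular, if F(·, y) is linear with F(z, y) = ⟨f, z⟩ for all z, this reads F(x⁺, y) − F(x, y) ≤ −(κ / (ω · ‖π_C(u)‖_∞)) · ‖π_C(u) − π_C(u')‖₂². -/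
set_option autoImplicit false

open scoped RealInnerProductSpace
open Finset

noncomputable section

/-- The lifted vector `(t, y) ∈ ℝ × ℝⁿ = ℝ^{n+1}`. -/
def pr {n : ℕ} (t : ℝ) (y : EuclideanSpace ℝ (Fin n)) :
    EuclideanSpace ℝ (Fin (n + 1)) :=
  WithLp.toLp 2 (Fin.cons t (fun i => y i) : Fin (n + 1) → ℝ)

/-- The conic hull `cone({κ} × X) = {α • (κ, x) : α ≥ 0, x ∈ X}`. -/
def coneLift {n : ℕ} (κ : ℝ) (X : Set (EuclideanSpace ℝ (Fin n))) :
    Set (EuclideanSpace ℝ (Fin (n + 1))) :=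
  {u | ∃ α : ℝ, 0 ≤ α ∧ ∃ x ∈ X, u = α • pr κ x}

/-- `p` is the Euclidean orthogonal projection of `u` onto the set `S`. -/
def IsProjOn {E : Type*} [NormedAddCommGroup E] [InnerProductSpace ℝ E]
    (u : E) (S : Set E) (p : E) : Prop :=
  p ∈ S ∧ ∀ z ∈ S, dist u p ≤ dist u z

/-- The max-norm `‖u‖_∞ = max_i |u_i|` on `ℝ^{n+1}`. -/
def maxNorm {n : ℕ} (u : EuclideanSpace ℝ (Fin (n + 1))) : ℝ :=
  Finset.univ.sup' ⟨0, Finset.mem_univ 0⟩ fun i => |u i|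

lemma pr_smul {n : ℕ} (c t : ℝ) (y : EuclideanSpace ℝ (Fin n)) :
    c • pr t y = pr (c * t) (c • y) := by
  ext i
  induction i using Fin.cases <;> simp [pr, PiLp.smul_apply]

lemma pr_add {n : ℕ} (s t : ℝ) (y z : EuclideanSpace ℝ (Fin n)) :
    pr s y + pr t z = pr (s + t) (y + z) := by
  ext i
  induction i using Fin.cases <;> simp [pr, PiLp.add_apply]

lemma pr_inner {n : ℕ} (s t : ℝ) (y z : EuclideanSpace ℝ (Fin n)) :
    ⟪pr s y, pr t z⟫ = s * t + ⟪y, z⟫ := by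
  simp [pr, PiLp.inner_apply, Fin.sum_univ_succ, RCLike.inner_apply, conj_trivial]
  ring

lemma coneLift_convex {n : ℕ} (κ : ℝ) {X : Set (EuclideanSpace ℝ (Fin n))}
    (hX : Convex ℝ X) : Convex ℝ (coneLift κ X) := by
  rintro u ⟨a, ha, x1, hx1, rfl⟩ v ⟨b, hb, x2, hx2, rfl⟩ s t hs ht hst
  rcases eq_or_lt_of_le (by positivity : (0:ℝ) ≤ s * a + t * b) with hγ | hγ
  · have h1 : s * a = 0 := by nlinarith [mul_nonneg hs ha, mul_nonneg ht hb]
    have h2 : t * b = 0 := by nlinarith [mul_nonneg hs ha, mul_nonneg ht hb]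
    exact ⟨0, le_refl 0, x1, hx1, by rw [smul_smul, smul_smul, h1, h2]; simp⟩
  · set γ := s * a + t * b with hγdef
    refine ⟨γ, hγ.le, (s * a / γ) • x1 + (t * b / γ) • x2,
      hX hx1 hx2 (by positivity) (by positivity) (by field_simp; rw [hγdef]), ?_⟩
    have hγne : γ ≠ 0 := ne_of_gt hγ
    have h2 : γ • ((s * a / γ) • x1 + (t * b / γ) • x2) = (s * a) • x1 + (t * b) • x2 := by
      rw [smul_add, smul_smul, smul_smul]; field_simp
    rw [smul_smul, smul_smul, pr_smul, pr_smul, pr_add, pr_smul, h2]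
    rw [hγdef]; ring_nf

lemma isProjOn_inner {E : Type*} [NormedAddCommGroup E] [InnerProductSpace ℝ E]
    {S : Set E} (hS : Convex ℝ S) {u p : E} (h : IsProjOn u S p) :
    ∀ z ∈ S, ⟪u - p, z - p⟫ ≤ 0 := by
  have : Nonempty S := ⟨⟨p, h.1⟩⟩
  have heq : ‖u - p‖ = ⨅ w : S, ‖u - (w : E)‖ := by
    refine le_antisymm (le_ciInf fun w => ?_) (ciInf_le (f := fun w : S => ‖u - (w : E)‖) ⟨0, by rintro r ⟨w, rfl⟩; positivity⟩ ⟨p, h.1⟩)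
    have := h.2 w w.2
    simpa [dist_eq_norm] using this
  exact (norm_eq_iInf_iff_real_inner_le_zero hS h.1).mp heq

/-- per-iteration claim of Theorem 6, part 2: under a CBA update
`u = u' + ω v` with `π_C(u') = α • (κ, x)`, `v = (⟨f, x⟩/κ, −f)`, and
`π_C(u) = β • (κ, x⁺)` with `β > 0`, one has
`⟨f, x⁺⟩ ≤ ⟨f, x⟩ − (κ/(ω ‖π_C(u)‖_∞)) ‖π_C(u) − π_C(u')‖₂²`. -/
theorem stmt13 {n : ℕ} (X : Set (EuclideanSpace ℝ (Fin n)))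
    (hXne : X.Nonempty) (hXcv : Convex ℝ X) (hXcp : IsCompact X)
    (κ : ℝ) (hκ : IsGreatest ((fun x => ‖x‖) '' X) κ) (hκpos : 0 < κ)
    (ω : ℝ) (hω : 0 < ω) (f : EuclideanSpace ℝ (Fin n))
    (x : EuclideanSpace ℝ (Fin n)) (hx : x ∈ X)
    (α : ℝ) (hα : 0 ≤ α)
    (u' u pu' pu : EuclideanSpace ℝ (Fin (n + 1)))
    (hpu' : IsProjOn u' (coneLift κ X) pu')
    (hu'α : pu' = α • pr κ x)
    (hu : u = u' + ω • pr (⟪f, x⟫ / κ) (-f))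
    (hpu : IsProjOn u (coneLift κ X) pu)
    (hpune : pu ≠ 0)
    (xp : EuclideanSpace ℝ (Fin n)) (hxp : xp ∈ X)
    (β : ℝ) (hβ : 0 < β) (huβ : pu = β • pr κ xp) :
    ⟪f, xp⟫ ≤ ⟪f, x⟫ - κ / (ω * maxNorm pu) * ‖pu - pu'‖ ^ 2 := by
  have hconv : Convex ℝ (coneLift κ X) := coneLift_convex κ hXcv
  set v : EuclideanSpace ℝ (Fin (n + 1)) := pr (⟪f, x⟫ / κ) (-f) with hv
  -- variational inequalities
  have h1 : ⟪u - pu, pu' - pu⟫ ≤ 0 := isProjOn_inner hconv hpu pu' hpu'.1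
  have h2 : ⟪u' - pu', pu - pu'⟫ ≤ 0 := isProjOn_inner hconv hpu' pu hpu.1
  -- monotonicity of projections
  have key : ‖pu - pu'‖ ^ 2 ≤ ⟪u - u', pu - pu'⟫ := by
    have e : u - u' = (u - pu) - (u' - pu') + (pu - pu') := by abel
    rw [e, inner_add_left, inner_sub_left, real_inner_self_eq_norm_sq]
    have h1' : (0:ℝ) ≤ ⟪u - pu, pu - pu'⟫ := by
      have e2 : pu' - pu = -(pu - pu') := by abel
      rw [e2, inner_neg_right] at h1
      linarith
    linarith
  -- inner products with v
  have hvpu' : ⟪v, pu'⟫ = 0 := by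
    rw [hu'α, real_inner_smul_right, hv, pr_inner, inner_neg_left,
      div_mul_cancel₀ _ (ne_of_gt hκpos)]
    ring
  have hvpu : ⟪v, pu⟫ = β * (⟪f, x⟫ - ⟪f, xp⟫) := by
    rw [huβ, real_inner_smul_right, hv, pr_inner, inner_neg_left,
      div_mul_cancel₀ _ (ne_of_gt hκpos)]
    ring
  have huu' : u - u' = ω • v := by rw [hu]; abel
  have key2 : ‖pu - pu'‖ ^ 2 ≤ ω * β * (⟪f, x⟫ - ⟪f, xp⟫) := by
    have : ⟪u - u', pu - pu'⟫ = ω * (⟪v, pu⟫ - ⟪v, pu'⟫) := by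
      rw [huu', real_inner_smul_left, inner_sub_right]
    rw [this, hvpu', hvpu] at key
    linarith [key]
  -- maxNorm bound
  have hpu0 : pu 0 = β * κ := by
    rw [huβ]
    simp [pr, PiLp.smul_apply]
  have hM : β * κ ≤ maxNorm pu := by
    calc β * κ = |pu 0| := by rw [hpu0]; exact (abs_of_pos (by positivity)).symm
    _ ≤ maxNorm pu := Finset.le_sup' (fun i => |pu i|) (Finset.mem_univ 0)
  have hMpos : 0 < maxNorm pu := lt_of_lt_of_le (by positivity) hM
  -- conclude
  set N := ‖pu - pu'‖ ^ 2 with hN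
  have hNnn : 0 ≤ N := by positivity
  set D := ⟪f, x⟫ - ⟪f, xp⟫ with hD
  have hDnn : 0 ≤ D := by nlinarith [key2, mul_pos hω hβ]
  have goal' : κ / (ω * maxNorm pu) * N ≤ D := by
    rw [div_mul_eq_mul_div, div_le_iff₀ (by positivity)]
    nlinarith [mul_le_mul_of_nonneg_left key2 hκpos.le,
      mul_le_mul_of_nonneg_left hM (mul_nonneg hω.le hDnn)]
  linarith [goal']


end
end

section
/- Let Δ(n) = {x ∈ ℝⁿ : x_i ≥ 0 for all i, ∑_{i=1}^n x_i = 1}, C = cone({1} × Δ(n)) ⊆ ℝ^{n+1}, and C° = {(t, y) ∈ ℝ × ℝⁿ : max_i y_i ≤ −t} its polar cone. Fix u = (ũ, û) ∈ ℝ × ℝⁿ. Then: (i) the map t ↦ t + ∑_{i=1}^n max(û_i + t, 0) is strictly increasing on ℝ and there is a unique t* ∈ ℝ with t* + ∑_{i=1}^n max(û_i + t*, 0) = ũ; (ii) if u ∉ C° (equivalently max_i û_i > −ũ), then the Euclidean orthogonal projection of u onto C° is π_{C°}(u) = (t*, ŷ) where ŷ_i = min(−t*, û_i) for every i ∈ [n].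 -/
set_option autoImplicit false

open scoped RealInnerProductSpace
open Finset

noncomputable section

/-- The polar of the simplex cone: `C° = {(t, y) : max_i y_i ≤ −t} ⊆ ℝ^{n+1}`. -/
def simplexPolar (n : ℕ) : Set (EuclideanSpace ℝ (Fin (n + 1))) :=
  {u | ∀ i : Fin n, u i.succ ≤ -(u 0)}

/-- Proposition 1: (i) `t ↦ t + ∑ᵢ max(ûᵢ + t, 0)` is strictly
increasing and takes the value `ũ` at a unique `t*`; (ii) if `max_i ûᵢ > −ũ`,
the Euclidean projection of `u = (ũ, û)` onto `C°` is `(t*, ŷ)` with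
`ŷᵢ = min(−t*, ûᵢ)`. -/
theorem stmt15 (n : ℕ) (utld : ℝ) (uhat : EuclideanSpace ℝ (Fin n)) :
    StrictMono (fun t : ℝ => t + ∑ i, max (uhat i + t) 0) ∧
    (∃! tstar : ℝ, tstar + ∑ i, max (uhat i + tstar) 0 = utld) ∧
    (∀ tstar : ℝ, tstar + ∑ i, max (uhat i + tstar) 0 = utld →
      (∃ i, -utld < uhat i) →
      IsProjOn (pr utld uhat) (simplexPolar n)
        (pr tstar (WithLp.toLp 2 (fun i => min (-tstar) (uhat i))))) := by
  set f : ℝ → ℝ := fun t => t + ∑ i, max (uhat i + t) 0 with hf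
  have hmono : StrictMono f := by
    intro a b hab
    have hs : ∑ i, max (uhat i + a) 0 ≤ ∑ i, max (uhat i + b) 0 :=
      Finset.sum_le_sum fun i _ => max_le_max (by linarith) le_rfl
    simp only [hf]
    linarith
  refine ⟨hmono, ?_, ?_⟩
  · -- existence and uniqueness
    have hcont : Continuous f := by
      apply continuous_id.add
      exact continuous_finset_sum _ fun i _ =>
        (continuous_const.add continuous_id).max continuous_const
    set S : ℝ := ∑ i, max (uhat i) 0 with hS
    have hS0 : 0 ≤ S := Finset.sum_nonneg fun i _ => le_max_right _ _
    set a : ℝ := min (utld - S) 0 with ha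
    have hab : a ≤ utld := le_trans (min_le_left _ _) (by linarith)
    have hfa : f a ≤ utld := by
      have h1 : ∑ i, max (uhat i + a) 0 ≤ S :=
        Finset.sum_le_sum fun i _ => max_le_max
          (by have : a ≤ 0 := min_le_right _ _; linarith) le_rfl
      have h2 : a ≤ utld - S := min_le_left _ _
      simp only [hf]; linarith
    have hfb : utld ≤ f utld := by
      have : 0 ≤ ∑ i, max (uhat i + utld) 0 :=
        Finset.sum_nonneg fun i _ => le_max_right _ _
      simp only [hf]; linarith
    have := intermediate_value_Icc hab hcont.continuousOn
    obtain ⟨t, -, ht⟩ := this ⟨hfa, hfb⟩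
    exact ⟨t, ht, fun t' ht' => hmono.injective (ht'.trans ht.symm)⟩
  · intro tstar htstar _
    set m : Fin n → ℝ := fun i => max (uhat i + tstar) 0 with hm
    have hsum : utld - tstar = ∑ i, m i := by
      simp only [hm]; linarith [htstar]
    have hdiff : ∀ i, uhat i - min (-tstar) (uhat i) = m i := by
      intro i
      rcases le_total (uhat i + tstar) 0 with h | h
      · rw [min_eq_right (by linarith), hm]; simp [max_eq_right h]
      · rw [min_eq_left (by linarith)]
        simp only [hm, max_eq_left h]; ring
    set p : EuclideanSpace ℝ (Fin (n + 1)) :=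
      pr tstar (WithLp.toLp 2 (fun i => min (-tstar) (uhat i))) with hp
    set u : EuclideanSpace ℝ (Fin (n + 1)) := pr utld uhat with hu
    have hu0 : u 0 = utld := rfl
    have hus : ∀ i : Fin n, u i.succ = uhat i := fun i => by
      simp [hu, pr, Fin.cons_succ]
    have hp0 : p 0 = tstar := rfl
    have hps : ∀ i : Fin n, p i.succ = min (-tstar) (uhat i) := fun i => by
      simp [hp, pr, Fin.cons_succ]
    constructor
    · intro i
      rw [hps, hp0]
      exact min_le_left _ _
    · intro z hz
      rw [EuclideanSpace.dist_eq, EuclideanSpace.dist_eq]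
      apply Real.sqrt_le_sqrt
      have key : ∀ j : Fin (n + 1),
          dist (u j) (z j) ^ 2 =
          dist (u j) (p j) ^ 2 + (p j - z j) ^ 2 + 2 * ((u j - p j) * (p j - z j)) := by
        intro j
        rw [Real.dist_eq, Real.dist_eq, sq_abs, sq_abs]
        ring
      rw [Finset.sum_congr rfl fun j _ => key j, Finset.sum_add_distrib,
        Finset.sum_add_distrib]
      have hsq : 0 ≤ ∑ j : Fin (n + 1), (p j - z j) ^ 2 :=
        Finset.sum_nonneg fun j _ => sq_nonneg _
      have hcross : 0 ≤ ∑ j : Fin (n + 1), (u j - p j) * (p j - z j) := by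
        rw [Fin.sum_univ_succ]
        have huc : ∀ i : Fin n, (u i.succ - p i.succ) * (p i.succ - z i.succ)
            = m i * (min (-tstar) (uhat i) - z i.succ) := by
          intro i; rw [hus, hps, hdiff]
        rw [Finset.sum_congr rfl fun i _ => huc i, hu0, hp0, hsum,
          Finset.sum_mul, ← Finset.sum_add_distrib]
        apply Finset.sum_nonneg
        intro i _
        rcases le_or_gt (uhat i + tstar) 0 with h | h
        · have : m i = 0 := max_eq_right h
          simp [this]
        · have hmi : m i = uhat i + tstar := max_eq_left h.le
          have hmin : min (-tstar) (uhat i) = -tstar := min_eq_left (by linarith)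
          have hzi := hz i
          rw [hmi, hmin]
          nlinarith
      have h2 : ∑ j : Fin (n + 1), 2 * ((u j - p j) * (p j - z j))
          = 2 * ∑ j : Fin (n + 1), (u j - p j) * (p j - z j) :=
        (Finset.mul_sum _ _ _).symm
      rw [h2]
      linarith

end
end
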